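/- Let N ≥ 1, let S ⊆ ℝ^N be compact, let h ∈ B_S, let D_1, …, D_M ⊆ ℝ^N be measurable sets, and let ω_1, …, ω_M ∈ (0,1] with ω_1 + ⋯ + ω_M = 1. Let μ > 0 and 0 < τ < 2/(1 + 2μ). Define \hat{T}_h f = Σ_{m=1}^M ω_m P_S((1 − μτ) f + τ χ_{D_m}(h − f)). If \hat{f}* ∈ B_S satisfies \hat{T}_h \hat{f}* = \hat{f}*, then \hat{f}* is the unique minimizer over f ∈ B_S of the Tikhonov functional γ(f) = Σ_{m=1}^M ω_m ‖χ_{D_m} f − h‖² + μ‖f‖². -/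

import Mathlib

open MeasureTheory FourierTransform Filter

noncomputable section

/-- The Hilbert space `L²(ℝᴺ; ℂ)` of square-integrable functions on `ℝᴺ`. -/
abbrev L2Space (N : ℕ) : Type :=
  Lp ℂ 2 (volume : Measure (EuclideanSpace ℝ (Fin N)))

/-- `f ∈ L²(ℝᴺ)` is bandlimited to `S`: its Fourier transform vanishes (a.e.) outside `S`;
equivalently, `f` agrees a.e. with the inverse Fourier transform of an integrable function `F`
vanishing outside `S`. -/
def IsBandlimited {N : ℕ} (S : Set (EuclideanSpace ℝ (Fin N))) (f : L2Space N) : Prop :=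
  ∃ F : EuclideanSpace ℝ (Fin N) → ℂ,
    Integrable F ∧ (∀ k, k ∉ S → F k = 0) ∧
      (f : EuclideanSpace ℝ (Fin N) → ℂ) =ᵐ[volume] 𝓕⁻ F

/-- Multiplication of `f ∈ L²` by the indicator function `χ_D`, as an element of `L²`. -/
def chiMul {N : ℕ} {D : Set (EuclideanSpace ℝ (Fin N))} (hD : MeasurableSet D)
    (f : L2Space N) : L2Space N :=
  ((Lp.memLp f).indicator hD).toLp (D.indicator f)

/-- The orthogonal projection of `L²(ℝᴺ)` onto a closed subspace `K`. -/
def projOf {N : ℕ} (K : Submodule ℂ (L2Space N)) (hK : IsClosed (K : Set (L2Space N))) :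
    L2Space N → L2Space N :=
  haveI : CompleteSpace K := hK.completeSpace_coe
  fun f => (K.orthogonalProjection f : L2Space N)

/-- The operator `T_h^{(D)} f = P_S (f + χ_D (h − f))` (single region). -/
def Tsingle {N : ℕ} (K : Submodule ℂ (L2Space N)) (hK : IsClosed (K : Set (L2Space N)))
    {D : Set (EuclideanSpace ℝ (Fin N))} (hD : MeasurableSet D)
    (h f : L2Space N) : L2Space N :=
  projOf K hK (f + chiMul hD (h - f))

/-- The regularized operator `T̂_h f = ∑ m, ω m • P_S ((1 − μτ) f + τ χ_{D m} (h − f))`. -/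
def TmultiReg {N : ℕ} (K : Submodule ℂ (L2Space N)) (hK : IsClosed (K : Set (L2Space N)))
    {M : ℕ} {D : Fin M → Set (EuclideanSpace ℝ (Fin N))} (hD : ∀ m, MeasurableSet (D m))
    (ω : Fin M → ℝ) (μ τ : ℝ) (h f : L2Space N) : L2Space N :=
  ∑ m, ω m • projOf K hK ((1 - μ * τ) • f + τ • chiMul (hD m) (h - f))

lemma chiMul_ae {N : ℕ} {D : Set (EuclideanSpace ℝ (Fin N))} (hD : MeasurableSet D)
    (f : L2Space N) :
    (chiMul hD f : EuclideanSpace ℝ (Fin N) → ℂ) =ᵐ[volume] D.indicator f :=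
  MemLp.coeFn_toLp _

lemma chiMul_sub {N : ℕ} {D : Set (EuclideanSpace ℝ (Fin N))} (hD : MeasurableSet D)
    (f g : L2Space N) : chiMul hD (f - g) = chiMul hD f - chiMul hD g := by
  apply Lp.ext
  filter_upwards [chiMul_ae hD (f - g), chiMul_ae hD f, chiMul_ae hD g,
      Lp.coeFn_sub (chiMul hD f) (chiMul hD g),
      (Lp.coeFn_sub f g).indicator (s := D)] with a h1 h2 h3 h4 h5
  rw [h1, h5, h4, Pi.sub_apply, h2, h3]
  by_cases ha : a ∈ D <;>
    simp [Set.indicator_of_mem, Set.indicator_of_notMem, ha]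

lemma chiMul_idem {N : ℕ} {D : Set (EuclideanSpace ℝ (Fin N))} (hD : MeasurableSet D)
    (f : L2Space N) : chiMul hD (chiMul hD f) = chiMul hD f := by
  apply Lp.ext
  filter_upwards [chiMul_ae hD (chiMul hD f), chiMul_ae hD f,
      (chiMul_ae hD f).indicator (s := D)] with a h1 h2 h3
  rw [h1, h3, Set.indicator_indicator, Set.inter_self, ← h2]

lemma inner_chiMul {N : ℕ} {D : Set (EuclideanSpace ℝ (Fin N))} (hD : MeasurableSet D)
    (f g : L2Space N) : (inner ℂ (chiMul hD f) g : ℂ) = inner ℂ f (chiMul hD g) := by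
  rw [L2.inner_def, L2.inner_def]
  apply integral_congr_ae
  filter_upwards [chiMul_ae hD f, chiMul_ae hD g] with a h1 h2
  rw [h1, h2]
  by_cases ha : a ∈ D <;>
    simp [Set.indicator_of_mem, Set.indicator_of_notMem, ha]

/-- With the hypotheses of the regularized iteration, any fixed point
`f̂* ∈ B_S` of `T̂_h f = ∑ m, ω_m P_S((1 − μτ) f + τ χ_{D_m}(h − f))` is the unique minimizer
over `f ∈ B_S` of the Tikhonov functional
`γ(f) = ∑ m, ω_m ‖χ_{D_m} f − h‖² + μ ‖f‖²`. -/
theorem regularized_fixedPoint_minimizes_tikhonov (N : ℕ) (hN : 1 ≤ N)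
    (S : Set (EuclideanSpace ℝ (Fin N))) (hS : IsCompact S)
    (K : Submodule ℂ (L2Space N))
    (hKset : (K : Set (L2Space N)) = {f : L2Space N | IsBandlimited S f})
    (hK : IsClosed (K : Set (L2Space N)))
    (h : L2Space N) (hh : IsBandlimited S h)
    (M : ℕ) (D : Fin M → Set (EuclideanSpace ℝ (Fin N))) (hD : ∀ m, MeasurableSet (D m))
    (ω : Fin M → ℝ) (hω : ∀ m, ω m ∈ Set.Ioc (0 : ℝ) 1) (hωsum : ∑ m, ω m = 1)
    (μ τ : ℝ) (hμ : 0 < μ) (hτ0 : 0 < τ) (hτ : τ < 2 / (1 + 2 * μ))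
    (fstar : L2Space N) (hfstar : IsBandlimited S fstar)
    (hfix : TmultiReg K hK hD ω μ τ h fstar = fstar) :
    (∀ f : L2Space N, IsBandlimited S f →
        (∑ m, ω m * ‖chiMul (hD m) fstar - h‖ ^ 2) + μ * ‖fstar‖ ^ 2 ≤
          (∑ m, ω m * ‖chiMul (hD m) f - h‖ ^ 2) + μ * ‖f‖ ^ 2) ∧
      ∀ f : L2Space N, IsBandlimited S f → f ≠ fstar →
        (∑ m, ω m * ‖chiMul (hD m) fstar - h‖ ^ 2) + μ * ‖fstar‖ ^ 2 <
          (∑ m, ω m * ‖chiMul (hD m) f - h‖ ^ 2) + μ * ‖f‖ ^ 2 := by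
  haveI : CompleteSpace K := hK.completeSpace_coe
  have hmem : ∀ f : L2Space N, IsBandlimited S f → f ∈ K := by
    intro f hf
    show f ∈ (K : Set (L2Space N))
    rw [hKset]; exact hf
  set Pc : L2Space N →L[ℂ] L2Space N := K.subtypeL.comp K.orthogonalProjection with hPc
  have hproj : ∀ x, projOf K hK x = Pc x := fun x => rfl
  have hPcK : ∀ x ∈ K, Pc x = x := by
    intro x hx
    show (K.orthogonalProjection x : L2Space N) = x
    rw [← Submodule.starProjection_apply]; exact K.starProjection_eq_self_iff.mpr hx
  have hPinner : ∀ x, ∀ g ∈ K, (inner ℂ (Pc x) g : ℂ) = inner ℂ x g := by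
    intro x g hg
    show (inner ℂ ((K.orthogonalProjection x : L2Space N)) g : ℂ) = _
    rw [← Submodule.starProjection_apply, Submodule.inner_starProjection_left_eq_right,
      K.starProjection_eq_self_iff.mpr hg]
  -- derive P w = μ • fstar
  have hPcfstar : Pc fstar = fstar := hPcK fstar (hmem fstar hfstar)
  have e1 : ∀ m : Fin M, Pc ((1 - μ * τ) • fstar + τ • chiMul (hD m) (h - fstar))
      = (1 - μ * τ) • fstar + τ • Pc (chiMul (hD m) (h - fstar)) := by
    intro m
    rw [map_add, Pc.map_smul_of_tower, Pc.map_smul_of_tower, hPcfstar]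
  simp only [TmultiReg, hproj, e1] at hfix
  have e2 : ∑ m : Fin M, ω m • ((1 - μ * τ) • fstar + τ • Pc (chiMul (hD m) (h - fstar)))
      = (1 - μ * τ) • fstar + τ • Pc (∑ m, ω m • chiMul (hD m) (h - fstar)) := by
    simp only [smul_add, Finset.sum_add_distrib]
    congr 1
    · rw [← Finset.sum_smul, hωsum, one_smul]
    · rw [map_sum]
      rw [Finset.smul_sum]
      refine Finset.sum_congr rfl fun m _ => ?_
      rw [Pc.map_smul_of_tower]
      rw [smul_comm]
  rw [e2] at hfix
  have hPw : Pc (∑ m, ω m • chiMul (hD m) (h - fstar)) = μ • fstar := by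
    apply smul_right_injective (L2Space N) (ne_of_gt hτ0)
    show τ • Pc (∑ m, ω m • chiMul (hD m) (h - fstar)) = τ • μ • fstar
    have h3 : τ • Pc (∑ m, ω m • chiMul (hD m) (h - fstar)) = fstar - (1 - μ * τ) • fstar := by
      rw [eq_sub_iff_add_eq, add_comm]; exact hfix
    rw [h3, smul_smul]
    module
  -- gradient identity
  have hwg : ∀ g ∈ K, RCLike.re (inner ℂ (∑ m, ω m • chiMul (hD m) (h - fstar)) g : ℂ)
      = μ * RCLike.re (inner ℂ fstar g : ℂ) := by
    intro g hg
    rw [← hPinner _ g hg, hPw, RCLike.real_smul_eq_coe_smul (K := ℂ),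
      inner_smul_real_left, RCLike.smul_re]
  -- key expansion
  have key : ∀ f : L2Space N, IsBandlimited S f →
      (∑ m, ω m * ‖chiMul (hD m) f - h‖ ^ 2) + μ * ‖f‖ ^ 2
        = ((∑ m, ω m * ‖chiMul (hD m) fstar - h‖ ^ 2) + μ * ‖fstar‖ ^ 2)
          + ((∑ m, ω m * ‖chiMul (hD m) (f - fstar)‖ ^ 2) + μ * ‖f - fstar‖ ^ 2) := by
    intro f hf
    have hgK : f - fstar ∈ K := K.sub_mem (hmem f hf) (hmem fstar hfstar)
    have hterm : ∀ m : Fin M, ‖chiMul (hD m) f - h‖ ^ 2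
        = ‖chiMul (hD m) fstar - h‖ ^ 2
          + 2 * RCLike.re (inner ℂ (chiMul (hD m) fstar - h) (chiMul (hD m) (f - fstar)) : ℂ)
          + ‖chiMul (hD m) (f - fstar)‖ ^ 2 := by
      intro m
      have hd : chiMul (hD m) f - h
          = (chiMul (hD m) fstar - h) + chiMul (hD m) (f - fstar) := by
        rw [chiMul_sub]; abel
      rw [hd, norm_add_sq (𝕜 := ℂ)]
    have hT : ∀ m : Fin M,
        RCLike.re (inner ℂ (chiMul (hD m) fstar - h) (chiMul (hD m) (f - fstar)) : ℂ)
          = - RCLike.re (inner ℂ (chiMul (hD m) (h - fstar)) (f - fstar) : ℂ) := by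
      intro m
      rw [← inner_chiMul]
      have hA : chiMul (hD m) (chiMul (hD m) fstar - h) = - chiMul (hD m) (h - fstar) := by
        rw [chiMul_sub, chiMul_sub, chiMul_idem]; abel
      rw [hA, inner_neg_left]
      simp
    have hnorm : ‖f‖ ^ 2 = ‖fstar‖ ^ 2 + 2 * RCLike.re (inner ℂ fstar (f - fstar) : ℂ)
        + ‖f - fstar‖ ^ 2 := by
      conv_lhs => rw [show f = fstar + (f - fstar) by abel]
      rw [norm_add_sq (𝕜 := ℂ)]
    have hsum : ∑ m, ω m * RCLike.re (inner ℂ (chiMul (hD m) (h - fstar)) (f - fstar) : ℂ)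
        = μ * RCLike.re (inner ℂ fstar (f - fstar) : ℂ) := by
      rw [← hwg (f - fstar) hgK, sum_inner, map_sum]
      refine Finset.sum_congr rfl fun m _ => ?_
      rw [RCLike.real_smul_eq_coe_smul (K := ℂ), inner_smul_real_left, RCLike.smul_re]
    simp only [hterm, hnorm, hT]
    have e3 : ∑ m, ω m * (‖chiMul (hD m) fstar - h‖ ^ 2
        + 2 * -RCLike.re (inner ℂ (chiMul (hD m) (h - fstar)) (f - fstar) : ℂ)
        + ‖chiMul (hD m) (f - fstar)‖ ^ 2)
        = (∑ m, ω m * ‖chiMul (hD m) fstar - h‖ ^ 2)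
          - 2 * (∑ m, ω m * RCLike.re (inner ℂ (chiMul (hD m) (h - fstar)) (f - fstar) : ℂ))
          + (∑ m, ω m * ‖chiMul (hD m) (f - fstar)‖ ^ 2) := by
      have e4 : ∀ m ∈ Finset.univ, ω m * (‖chiMul (hD m) fstar - h‖ ^ 2
          + 2 * -RCLike.re (inner ℂ (chiMul (hD m) (h - fstar)) (f - fstar) : ℂ)
          + ‖chiMul (hD m) (f - fstar)‖ ^ 2)
          = ω m * ‖chiMul (hD m) fstar - h‖ ^ 2
            - 2 * (ω m * RCLike.re (inner ℂ (chiMul (hD m) (h - fstar)) (f - fstar) : ℂ))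
            + ω m * ‖chiMul (hD m) (f - fstar)‖ ^ 2 := fun m _ => by ring
      rw [Finset.sum_congr rfl e4, Finset.sum_add_distrib, Finset.sum_sub_distrib,
        ← Finset.mul_sum]
    rw [e3, hsum]
    ring
  constructor
  · intro f hf
    have hk := key f hf
    have h1 : (0:ℝ) ≤ ∑ m, ω m * ‖chiMul (hD m) (f - fstar)‖ ^ 2 :=
      Finset.sum_nonneg fun m _ => mul_nonneg (hω m).1.le (sq_nonneg _)
    have h2 : (0:ℝ) ≤ μ * ‖f - fstar‖ ^ 2 := mul_nonneg hμ.le (sq_nonneg _)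
    linarith
  · intro f hf hne
    have hk := key f hf
    have h1 : (0:ℝ) ≤ ∑ m, ω m * ‖chiMul (hD m) (f - fstar)‖ ^ 2 :=
      Finset.sum_nonneg fun m _ => mul_nonneg (hω m).1.le (sq_nonneg _)
    have h2 : (0:ℝ) < μ * ‖f - fstar‖ ^ 2 := by
      have : (0:ℝ) < ‖f - fstar‖ := norm_pos_iff.mpr (sub_ne_zero.mpr hne)
      exact mul_pos hμ (pow_pos this 2)
    linarith
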